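/- arXiv:2403.09960 — 6 statements merged into one kernel-verified Lean document; each statement's English description precedes it below -/
import Mathlib

section
/- Let λ > 0 and let h : (−1,∞) → ℝ be defined by h(u) := 2((1+u)log(1+u) − u)/u² for u ≠ 0. Then for every x > 0: Σ_{j ∈ ℕ, j ≥ λ+x} e^{−λ}λ^j/j! ≤ exp(−(x²/(2λ))·h(x/λ)), and for every 0 < x < λ: Σ_{j ∈ ℕ, j ≤ λ−x} e^{−λ}λ^j/j! ≤ exp(−(x²/(2λ))·h(−x/λ)). (Equivalently, a Poisson random variable N with mean λ satisfies P(N ≥ λ+x) ≤ exp(−λ((1+x/λ)log(1+x/λ) − x/λ)) and P(N ≤ λ−x) ≤ exp(−λ((1−x/λ)log(1−x/λ) + x/λ)).) -/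
open Real

noncomputable section

lemma exp_tsum_aux (r : ℝ) : (∑' j : ℕ, r ^ j / (Nat.factorial j : ℝ)) = Real.exp r := by
  rw [Real.exp_eq_exp_ℝ, NormedSpace.exp_eq_tsum_div]

lemma key_aux (c r : ℝ) (f : ℕ → ℝ) (h1 : ∀ j, 0 ≤ f j)
    (h2 : ∀ j, f j ≤ Real.exp c * r ^ j / (Nat.factorial j : ℝ)) :
    (∑' j : ℕ, f j) ≤ Real.exp (c + r) := by
  have hs : Summable (fun j : ℕ => Real.exp c * r ^ j / (Nat.factorial j : ℝ)) := by
    simpa [mul_div_assoc] using (Real.summable_pow_div_factorial r).mul_left (Real.exp c)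
  calc (∑' j : ℕ, f j) ≤ ∑' j : ℕ, Real.exp c * r ^ j / (Nat.factorial j : ℝ) :=
        Summable.tsum_le_tsum h2 (Summable.of_nonneg_of_le h1 h2 hs) hs
    _ = Real.exp c * ∑' j : ℕ, r ^ j / (Nat.factorial j : ℝ) := by
        rw [← tsum_mul_left]; simp [mul_div_assoc]
    _ = Real.exp (c + r) := by rw [exp_tsum_aux, ← Real.exp_add]

theorem stmt11 (lam : ℝ) (hlam : 0 < lam)
    (h : ℝ → ℝ)
    (hdef : ∀ u : ℝ, -1 < u → u ≠ 0 →
      h u = 2 * ((1 + u) * Real.log (1 + u) - u) / u ^ 2) :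
    (∀ x : ℝ, 0 < x →
      (∑' j : ℕ, if lam + x ≤ (j : ℝ) then
          Real.exp (-lam) * lam ^ j / (Nat.factorial j : ℝ) else 0) ≤
        Real.exp (-(x ^ 2 / (2 * lam)) * h (x / lam))) ∧
    (∀ x : ℝ, 0 < x → x < lam →
      (∑' j : ℕ, if (j : ℝ) ≤ lam - x then
          Real.exp (-lam) * lam ^ j / (Nat.factorial j : ℝ) else 0) ≤
        Real.exp (-(x ^ 2 / (2 * lam)) * h (-(x / lam)))) := by
  have hlam' : lam ≠ 0 := ne_of_gt hlam
  constructor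
  · intro x hx
    set u : ℝ := x / lam with hu
    have hux : lam * u = x := by rw [hu]; field_simp
    have hu0 : 0 < u := div_pos hx hlam
    have hu1 : (0:ℝ) < 1 + u := by linarith
    set t : ℝ := Real.log (1 + u) with ht
    have ht0 : 0 ≤ t := Real.log_nonneg (by linarith)
    have hexp : Real.exp t = 1 + u := Real.exp_log hu1
    have hbound : ∀ j : ℕ,
        (if lam + x ≤ (j : ℝ) then Real.exp (-lam) * lam ^ j / (Nat.factorial j : ℝ) else 0)
        ≤ Real.exp (-lam - t * (lam + x)) * (lam * Real.exp t) ^ j / (Nat.factorial j : ℝ) := by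
      intro j
      have hfpos : (0:ℝ) < (Nat.factorial j : ℝ) := by positivity
      split_ifs with hj
      · rw [div_le_div_iff_of_pos_right hfpos]
        have h1 : Real.exp (-lam) * lam ^ j
            = Real.exp (-lam - t * (lam + x)) * (lam ^ j * Real.exp (t * (lam + x))) := by
          rw [show -lam = (-lam - t * (lam + x)) + t * (lam + x) by ring, Real.exp_add]; ring
        rw [h1, mul_pow, ← Real.exp_nat_mul]
        refine mul_le_mul_of_nonneg_left
          (mul_le_mul_of_nonneg_left ?_ (pow_nonneg hlam.le j)) (Real.exp_pos _).le
        apply Real.exp_le_exp.2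
        nlinarith
      · positivity
    have hk := key_aux (-lam - t * (lam + x)) (lam * Real.exp t) _ (by
        intro j; split_ifs with hj
        · positivity
        · exact le_rfl) hbound
    refine hk.trans (le_of_eq ?_)
    congr 1
    rw [hdef u (by linarith) (ne_of_gt hu0), hexp, ← ht, ← hux]
    have hune : u ≠ 0 := ne_of_gt hu0
    field_simp
    ring
  · intro x hx hxl
    set u : ℝ := x / lam with hu
    have hux : lam * u = x := by rw [hu]; field_simp
    have hu0 : 0 < u := div_pos hx hlam
    have hu1 : u < 1 := (div_lt_one hlam).2 hxl
    set t : ℝ := -Real.log (1 - u) with ht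
    have ht0 : 0 ≤ t := by
      rw [ht, neg_nonneg]
      exact Real.log_nonpos (by linarith) (by linarith)
    have hexp : Real.exp (-t) = 1 - u := by
      rw [ht, neg_neg]; exact Real.exp_log (by linarith)
    have hbound : ∀ j : ℕ,
        (if (j : ℝ) ≤ lam - x then Real.exp (-lam) * lam ^ j / (Nat.factorial j : ℝ) else 0)
        ≤ Real.exp (-lam + t * (lam - x)) * (lam * Real.exp (-t)) ^ j / (Nat.factorial j : ℝ) := by
      intro j
      have hfpos : (0:ℝ) < (Nat.factorial j : ℝ) := by positivity
      split_ifs with hj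
      · rw [div_le_div_iff_of_pos_right hfpos]
        have h1 : Real.exp (-lam) * lam ^ j
            = Real.exp (-lam + t * (lam - x)) * (lam ^ j * Real.exp (-(t * (lam - x)))) := by
          rw [show -lam = (-lam + t * (lam - x)) + -(t * (lam - x)) by ring, Real.exp_add]; ring
        rw [h1, mul_pow, ← Real.exp_nat_mul]
        refine mul_le_mul_of_nonneg_left
          (mul_le_mul_of_nonneg_left ?_ (pow_nonneg hlam.le j)) (Real.exp_pos _).le
        apply Real.exp_le_exp.2
        nlinarith
      · positivity
    have hk := key_aux (-lam + t * (lam - x)) (lam * Real.exp (-t)) _ (by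
        intro j; split_ifs with hj
        · positivity
        · exact le_rfl) hbound
    refine hk.trans (le_of_eq ?_)
    congr 1
    have hlog : Real.log (1 + -u) = -t := by rw [show (1:ℝ) + -u = 1 - u by ring, ht, neg_neg]
    rw [hdef (-u) (by linarith) (by simpa using ne_of_gt hu0), hlog, hexp, ← hux]
    have hune : u ≠ 0 := ne_of_gt hu0
    field_simp
    ring
end
end

section
/- Let λ > 0 and let N be a Poisson random variable with mean λ. Then for every x > 0: max( P(N ≥ λ + x), P(N ≤ λ − x) ) ≤ exp(−x²/(2(λ + x))); that is, both Σ_{j ∈ ℕ, j ≥ λ+x} e^{−λ}λ^j/j! and Σ_{j ∈ ℕ, j ≤ λ−x} e^{−λ}λ^j/j! are at most exp(−x²/(2(λ+x))). -/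
open Real

noncomputable section

lemma exp_tsum (y : ℝ) : Real.exp y = ∑' n : ℕ, y ^ n / (Nat.factorial n : ℝ) := by
  rw [Real.exp_eq_exp_ℝ, NormedSpace.exp_eq_tsum_div]


lemma chernoff_upper (lam t a : ℝ) (hlam : 0 ≤ lam) (ht : 0 ≤ t) :
    (∑' j : ℕ, if a ≤ (j:ℝ) then Real.exp (-lam) * lam ^ j / (Nat.factorial j : ℝ) else 0)
      ≤ Real.exp (lam * Real.exp t - lam - t * a) := by
  set g : ℕ → ℝ := fun j => Real.exp (-lam - t*a) * ((lam * Real.exp t)^j / (Nat.factorial j : ℝ))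
    with hgdef
  have hg : Summable g := (Real.summable_pow_div_factorial _).mul_left _
  have h0 : ∀ j : ℕ, 0 ≤ (if a ≤ (j:ℝ) then Real.exp (-lam) * lam ^ j / (Nat.factorial j : ℝ) else 0) := by
    intro j; by_cases h : a ≤ (j:ℝ) <;> simp [h] <;> positivity
  have hle : ∀ j : ℕ, (if a ≤ (j:ℝ) then Real.exp (-lam) * lam ^ j / (Nat.factorial j : ℝ) else 0) ≤ g j := by
    intro j
    by_cases h : a ≤ (j:ℝ)
    · simp only [if_pos h, hgdef]
      have hpow : (lam * Real.exp t)^j = lam^j * Real.exp (t * j) := by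
        rw [mul_pow, ← Real.exp_nat_mul]; ring_nf
      rw [hpow]
      have key : Real.exp (-lam) ≤ Real.exp (-lam - t*a) * Real.exp (t*j) := by
        rw [← Real.exp_add]
        apply Real.exp_le_exp.2
        nlinarith [mul_le_mul_of_nonneg_left h ht]
      calc Real.exp (-lam) * lam ^ j / (Nat.factorial j : ℝ)
          ≤ (Real.exp (-lam - t*a) * Real.exp (t*j)) * lam ^ j / (Nat.factorial j : ℝ) := by
            gcongr
        _ = Real.exp (-lam - t*a) * (lam^j * Real.exp (t * j) / (Nat.factorial j : ℝ)) := by ring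
    · simp only [if_neg h, hgdef]; positivity
  calc (∑' j : ℕ, if a ≤ (j:ℝ) then Real.exp (-lam) * lam ^ j / (Nat.factorial j : ℝ) else 0)
      ≤ ∑' j, g j := Summable.tsum_le_tsum hle (Summable.of_nonneg_of_le h0 hle hg) hg
    _ = Real.exp (-lam - t*a) * Real.exp (lam * Real.exp t) := by
        rw [hgdef, tsum_mul_left, ← exp_tsum]
    _ = Real.exp (lam * Real.exp t - lam - t * a) := by rw [← Real.exp_add]; ring_nf


lemma chernoff_lower (lam t a : ℝ) (hlam : 0 ≤ lam) (ht : 0 ≤ t) :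
    (∑' j : ℕ, if (j:ℝ) ≤ a then Real.exp (-lam) * lam ^ j / (Nat.factorial j : ℝ) else 0)
      ≤ Real.exp (lam * Real.exp (-t) - lam + t * a) := by
  set g : ℕ → ℝ := fun j => Real.exp (-lam + t*a) * ((lam * Real.exp (-t))^j / (Nat.factorial j : ℝ))
    with hgdef
  have hg : Summable g := (Real.summable_pow_div_factorial _).mul_left _
  have h0 : ∀ j : ℕ, 0 ≤ (if (j:ℝ) ≤ a then Real.exp (-lam) * lam ^ j / (Nat.factorial j : ℝ) else 0) := by
    intro j; by_cases h : (j:ℝ) ≤ a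
    · simp only [if_pos h]; positivity
    · simp [h]
  have hle : ∀ j : ℕ, (if (j:ℝ) ≤ a then Real.exp (-lam) * lam ^ j / (Nat.factorial j : ℝ) else 0) ≤ g j := by
    intro j
    by_cases h : (j:ℝ) ≤ a
    · simp only [if_pos h, hgdef]
      have hpow : (lam * Real.exp (-t))^j = lam^j * Real.exp (-t * j) := by
        rw [mul_pow, ← Real.exp_nat_mul]; ring_nf
      rw [hpow]
      have key : Real.exp (-lam) ≤ Real.exp (-lam + t*a) * Real.exp (-t*j) := by
        rw [← Real.exp_add]
        apply Real.exp_le_exp.2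
        nlinarith [mul_le_mul_of_nonneg_left h ht]
      calc Real.exp (-lam) * lam ^ j / (Nat.factorial j : ℝ)
          ≤ (Real.exp (-lam + t*a) * Real.exp (-t*j)) * lam ^ j / (Nat.factorial j : ℝ) := by
            gcongr
        _ = Real.exp (-lam + t*a) * (lam^j * Real.exp (-t * j) / (Nat.factorial j : ℝ)) := by ring
    · simp only [if_neg h, hgdef]; positivity
  calc (∑' j : ℕ, if (j:ℝ) ≤ a then Real.exp (-lam) * lam ^ j / (Nat.factorial j : ℝ) else 0)
      ≤ ∑' j, g j := Summable.tsum_le_tsum hle (Summable.of_nonneg_of_le h0 hle hg) hg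
    _ = Real.exp (-lam + t*a) * Real.exp (lam * Real.exp (-t)) := by
        rw [hgdef, tsum_mul_left, ← exp_tsum]
    _ = Real.exp (lam * Real.exp (-t) - lam + t * a) := by rw [← Real.exp_add]; ring_nf


lemma key1 (lam : ℝ) (hlam : 0 < lam) (x : ℝ) (hx : 0 ≤ x) :
    x + x^2/(2*(lam+x)) ≤ (lam+x) * (Real.log (lam+x) - Real.log lam) := by
  set f : ℝ → ℝ := fun t => (lam+t) * (Real.log (lam+t) - Real.log lam) - t - t^2/(2*(lam+t))
    with hf
  have hd : ∀ y : ℝ, 0 ≤ y → HasDerivAt f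
      (Real.log (lam+y) - Real.log lam - (4*y*(lam+y) - 2*y^2)/(2*(lam+y))^2) y := by
    intro y hy
    have hpos : 0 < lam + y := by linarith
    have h1 : HasDerivAt (fun t : ℝ => lam + t) 1 y := by
      simpa using (hasDerivAt_id y).const_add lam
    have hlog : HasDerivAt (fun t : ℝ => Real.log (lam + t)) (1/(lam+y)) y := by
      simpa using h1.log hpos.ne'
    have hA := h1.mul (hlog.sub_const (Real.log lam))
    have hB := (hasDerivAt_pow 2 y).div (h1.const_mul 2) (by positivity)
    have := (hA.sub (hasDerivAt_id' y)).sub hB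
    refine this.congr_deriv ?_
    field_simp
    ring
  have hmono : MonotoneOn f (Set.Ici 0) := by
    apply monotoneOn_of_deriv_nonneg (convex_Ici 0)
    · intro y hy
      exact (hd y hy).continuousAt.continuousWithinAt
    · intro y hy
      rw [interior_Ici] at hy
      exact ((hd y hy.le).differentiableAt).differentiableWithinAt
    · intro y hy
      rw [interior_Ici] at hy
      rw [(hd y hy.le).deriv]
      have hpos : 0 < lam + y := by linarith [(Set.mem_Ioi.1 hy).le]
      have hlb : y/(lam+y) ≤ Real.log (lam+y) - Real.log lam := by
        have h := Real.log_le_sub_one_of_pos (x := lam/(lam+y)) (by positivity)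
        rw [Real.log_div hlam.ne' hpos.ne'] at h
        have : lam/(lam+y) - 1 = -(y/(lam+y)) := by field_simp; ring
        rw [this] at h
        linarith
      have h2 : (4*y*(lam+y) - 2*y^2)/(2*(lam+y))^2 ≤ y/(lam+y) := by
        rw [div_le_div_iff₀ (by positivity) (by positivity)]
        nlinarith [(Set.mem_Ioi.1 hy).le, hpos]
      linarith
  have h0 : f 0 = 0 := by norm_num [hf]
  have := hmono Set.self_mem_Ici (Set.mem_Ici.2 hx) hx
  rw [h0, hf] at this
  simp only at this
  linarith

lemma key2 (lam : ℝ) (hlam : 0 < lam) (x : ℝ) (hx : 0 < x) (hxl : x < lam) :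
    x^2/(2*lam) ≤ x + (lam-x) * (Real.log (lam-x) - Real.log lam) := by
  set g : ℝ → ℝ := fun t => t + (lam-t) * (Real.log (lam-t) - Real.log lam) - t^2/(2*lam)
    with hg
  have hd : ∀ y : ℝ, y < lam → HasDerivAt g
      (-(Real.log (lam-y) - Real.log lam) - y/lam) y := by
    intro y hy
    have hpos : 0 < lam - y := by linarith
    have h1 : HasDerivAt (fun t : ℝ => lam - t) (-1) y := by
      simpa using (hasDerivAt_id' y).const_sub lam
    have hlog : HasDerivAt (fun t : ℝ => Real.log (lam - t)) (-1/(lam-y)) y := by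
      simpa using h1.log hpos.ne'
    have hA := h1.mul (hlog.sub_const (Real.log lam))
    have hB := (hasDerivAt_pow 2 y).div_const (2*lam)
    have := ((hasDerivAt_id' y).add hA).sub hB
    refine this.congr_deriv ?_
    field_simp
    ring
  have hmono : MonotoneOn g (Set.Icc 0 x) := by
    apply monotoneOn_of_deriv_nonneg (convex_Icc 0 x)
    · intro y hy
      exact (hd y (lt_of_le_of_lt hy.2 hxl)).continuousAt.continuousWithinAt
    · intro y hy
      rw [interior_Icc] at hy
      exact ((hd y (lt_of_lt_of_le hy.2 hxl.le)).differentiableAt).differentiableWithinAt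
    · intro y hy
      rw [interior_Icc] at hy
      have hylam : y < lam := lt_trans hy.2 hxl
      rw [(hd y hylam).deriv]
      have hpos : 0 < lam - y := by linarith
      have hub : Real.log (lam-y) - Real.log lam ≤ -(y/lam) := by
        have h := Real.log_le_sub_one_of_pos (x := (lam-y)/lam) (by positivity)
        rw [Real.log_div hpos.ne' hlam.ne'] at h
        have : (lam-y)/lam - 1 = -(y/lam) := by field_simp; ring
        linarith [this ▸ h]
      linarith
  have h0 : g 0 = 0 := by norm_num [hg]
  have := hmono (Set.mem_Icc.2 ⟨le_refl 0, hx.le⟩) (Set.mem_Icc.2 ⟨hx.le, le_refl x⟩) hx.le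
  rw [h0, hg] at this
  simp only at this
  linarith


theorem stmt12 (lam : ℝ) (hlam : 0 < lam) (x : ℝ) (hx : 0 < x) :
    (∑' j : ℕ, if lam + x ≤ (j : ℝ) then
        Real.exp (-lam) * lam ^ j / (Nat.factorial j : ℝ) else 0) ≤
      Real.exp (-(x ^ 2 / (2 * (lam + x)))) ∧
    (∑' j : ℕ, if (j : ℝ) ≤ lam - x then
        Real.exp (-lam) * lam ^ j / (Nat.factorial j : ℝ) else 0) ≤
      Real.exp (-(x ^ 2 / (2 * (lam + x)))) := by
  have hpx : 0 < lam + x := by linarith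
  constructor
  · -- upper tail
    set t := Real.log (lam + x) - Real.log lam with htdef
    have ht : 0 ≤ t := by
      have := Real.log_le_log hlam (by linarith : lam ≤ lam + x)
      simp only [htdef]; linarith
    have hexp : Real.exp t = (lam + x) / lam := by
      rw [htdef, ← Real.log_div hpx.ne' hlam.ne', Real.exp_log (by positivity)]
    refine le_trans (chernoff_upper lam t (lam + x) hlam.le ht) (Real.exp_le_exp.2 ?_)
    rw [hexp]
    have heq : lam * ((lam + x) / lam) = lam + x := by field_simp
    rw [heq]
    have hk := key1 lam hlam x hx.le
    rw [htdef]
    linarith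
  · -- lower tail
    rcases lt_trichotomy x lam with hxl | hxl | hxl
    · set t := Real.log lam - Real.log (lam - x) with htdef
      have hpos : 0 < lam - x := by linarith
      have ht : 0 ≤ t := by
        have := Real.log_le_log hpos (by linarith : lam - x ≤ lam)
        simp only [htdef]; linarith
      have hexp : Real.exp (-t) = (lam - x) / lam := by
        rw [htdef, neg_sub, ← Real.log_div hpos.ne' hlam.ne',
          Real.exp_log (by positivity)]
      refine le_trans (chernoff_lower lam t (lam - x) hlam.le ht) (Real.exp_le_exp.2 ?_)
      rw [hexp]
      have heq : lam * ((lam - x) / lam) = lam - x := by field_simp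
      rw [heq]
      have hk := key2 lam hlam x hx hxl
      have hmono2 : x ^ 2 / (2 * (lam + x)) ≤ x ^ 2 / (2 * lam) := by
        apply div_le_div_of_nonneg_left (by positivity) (by positivity) (by linarith)
      rw [htdef]
      nlinarith [hk, hmono2]
    · -- x = lam
      have heval : (∑' j : ℕ, if (j : ℝ) ≤ lam - x then
          Real.exp (-lam) * lam ^ j / (Nat.factorial j : ℝ) else 0) = Real.exp (-lam) := by
        rw [tsum_eq_single 0]
        · rw [if_pos (by push_cast; linarith : ((0:ℕ):ℝ) ≤ lam - x)]
          norm_num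
        · intro j hj
          apply if_neg
          have : (1:ℝ) ≤ (j:ℝ) := by exact_mod_cast Nat.one_le_iff_ne_zero.2 hj
          linarith
      rw [heval]
      apply Real.exp_le_exp.2
      have : x ^ 2 / (2 * (lam + x)) = lam / 4 := by
        rw [← hxl]; field_simp; ring
      rw [this]
      linarith
    · -- lam < x : sum is zero
      have heval : (∑' j : ℕ, if (j : ℝ) ≤ lam - x then
          Real.exp (-lam) * lam ^ j / (Nat.factorial j : ℝ) else 0) = 0 := by
        have hzero : ∀ j : ℕ, (if (j : ℝ) ≤ lam - x then
            Real.exp (-lam) * lam ^ j / (Nat.factorial j : ℝ) else 0) = 0 := by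
          intro j
          apply if_neg
          have : (0:ℝ) ≤ (j:ℝ) := Nat.cast_nonneg j
          intro h; linarith
        rw [tsum_congr hzero, tsum_zero]
      rw [heval]
      positivity

end
end

section
/- For every real λ ≥ 0 and every integer k ≥ 1: Σ_{j=0}^{k−1} e^{−λ}λ^j/j! ≤ e·Σ_{j=0}^{k−1} e^{−λ/(j+2)} ≤ e·k·e^{−λ/(k+1)}. In particular the probability that a Poisson random variable with mean λ is strictly less than k is at most e·k·e^{−λ/(k+1)}. -/
open Real

noncomputable section

lemma term_bound (lam : ℝ) (hlam : 0 ≤ lam) (j : ℕ) :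
    Real.exp (-lam) * lam ^ j / (Nat.factorial j : ℝ) ≤
      Real.exp 1 * Real.exp (-(lam / ((j : ℝ) + 2))) := by
  have hj1 : (0:ℝ) < (j : ℝ) + 1 := by positivity
  have hj2 : (0:ℝ) < (j : ℝ) + 2 := by positivity
  have htpos : (0:ℝ) < ((j : ℝ) + 1) / ((j : ℝ) + 2) := by positivity
  have h1 : (lam * (((j : ℝ) + 1) / ((j : ℝ) + 2))) ^ j / (Nat.factorial j : ℝ)
      ≤ Real.exp (lam * (((j : ℝ) + 1) / ((j : ℝ) + 2))) :=
    Real.pow_div_factorial_le_exp _ (by positivity) j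
  have h2 : ((j : ℝ) + 2) / ((j : ℝ) + 1) ≤ Real.exp (1 / ((j : ℝ) + 1)) := by
    have h := Real.add_one_le_exp (1 / ((j : ℝ) + 1))
    rw [div_le_iff₀ hj1]
    calc (j : ℝ) + 2 = (1 / ((j : ℝ) + 1) + 1) * ((j : ℝ) + 1) := by field_simp; ring
      _ ≤ Real.exp (1 / ((j : ℝ) + 1)) * ((j : ℝ) + 1) :=
          mul_le_mul_of_nonneg_right h hj1.le
  have h2' : (((j : ℝ) + 2) / ((j : ℝ) + 1)) ^ j ≤ Real.exp 1 := by
    calc (((j : ℝ) + 2) / ((j : ℝ) + 1)) ^ j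
        ≤ (Real.exp (1 / ((j : ℝ) + 1))) ^ j := pow_le_pow_left₀ (by positivity) h2 j
      _ = Real.exp ((j : ℝ) * (1 / ((j : ℝ) + 1))) := by rw [← Real.exp_nat_mul]
      _ ≤ Real.exp 1 := by
          apply Real.exp_le_exp.2
          rw [mul_one_div, div_le_one hj1]; linarith
  have hpow : lam ^ j / (Nat.factorial j : ℝ) ≤
      Real.exp (lam * (((j : ℝ) + 1) / ((j : ℝ) + 2))) * (((j : ℝ) + 2) / ((j : ℝ) + 1)) ^ j := by
    have hsplit : lam ^ j / (Nat.factorial j : ℝ) =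
        ((lam * (((j : ℝ) + 1) / ((j : ℝ) + 2))) ^ j / (Nat.factorial j : ℝ)) *
          (((j : ℝ) + 2) / ((j : ℝ) + 1)) ^ j := by
      rw [div_mul_eq_mul_div, ← mul_pow]
      congr 2
      field_simp
    rw [hsplit]
    exact mul_le_mul_of_nonneg_right h1 (by positivity)
  have key : lam ^ j / (Nat.factorial j : ℝ) ≤
      Real.exp (lam * (((j : ℝ) + 1) / ((j : ℝ) + 2))) * Real.exp 1 :=
    hpow.trans (mul_le_mul_of_nonneg_left h2' (Real.exp_pos _).le)
  have heq : Real.exp (-lam) * (Real.exp (lam * (((j : ℝ) + 1) / ((j : ℝ) + 2))) * Real.exp 1)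
      = Real.exp 1 * Real.exp (-(lam / ((j : ℝ) + 2))) := by
    rw [← Real.exp_add, ← Real.exp_add, mul_comm (Real.exp 1), ← Real.exp_add]
    congr 1
    field_simp
    ring
  calc Real.exp (-lam) * lam ^ j / (Nat.factorial j : ℝ)
      = Real.exp (-lam) * (lam ^ j / (Nat.factorial j : ℝ)) := by ring
    _ ≤ Real.exp (-lam) * (Real.exp (lam * (((j : ℝ) + 1) / ((j : ℝ) + 2))) * Real.exp 1) :=
        mul_le_mul_of_nonneg_left key (Real.exp_pos _).le
    _ = _ := heq

theorem stmt13 (lam : ℝ) (hlam : 0 ≤ lam) (k : ℕ) (hk : 1 ≤ k) :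
    (∑ j ∈ Finset.range k, Real.exp (-lam) * lam ^ j / (Nat.factorial j : ℝ)) ≤
      Real.exp 1 * ∑ j ∈ Finset.range k, Real.exp (-(lam / ((j : ℝ) + 2))) ∧
    Real.exp 1 * (∑ j ∈ Finset.range k, Real.exp (-(lam / ((j : ℝ) + 2)))) ≤
      Real.exp 1 * (k : ℝ) * Real.exp (-(lam / ((k : ℝ) + 1))) := by
  constructor
  · rw [Finset.mul_sum]
    exact Finset.sum_le_sum fun j _ => term_bound lam hlam j
  · have hsum : (∑ j ∈ Finset.range k, Real.exp (-(lam / ((j : ℝ) + 2)))) ≤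
        (k : ℝ) * Real.exp (-(lam / ((k : ℝ) + 1))) := by
      calc (∑ j ∈ Finset.range k, Real.exp (-(lam / ((j : ℝ) + 2))))
          ≤ ∑ _j ∈ Finset.range k, Real.exp (-(lam / ((k : ℝ) + 1))) := by
            apply Finset.sum_le_sum
            intro j hj
            apply Real.exp_le_exp.2
            rw [neg_le_neg_iff]
            apply div_le_div_of_nonneg_left hlam (by positivity)
            have : (j : ℝ) ≤ (k : ℝ) - 1 := by
              have := Finset.mem_range.1 hj
              have : (j : ℝ) + 1 ≤ (k : ℝ) := by exact_mod_cast this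
              linarith
            linarith
        _ = (k : ℝ) * Real.exp (-(lam / ((k : ℝ) + 1))) := by
            rw [Finset.sum_const, Finset.card_range, nsmul_eq_mul]
    rw [mul_assoc]
    exact mul_le_mul_of_nonneg_left hsum (Real.exp_pos _).le
end
end

section
/- For every integer d ≥ 1, every integer j ≥ 0 and every real n > 0: n·∫_{[0,1]^d} e^{−n|x|}·(n|x|)^j dx = (1/(d−1)!)·∫_0^n (log n − log y)^{d−1}·y^j·e^{−y} dy, where for x = (x⁽¹⁾,…,x⁽ᵈ⁾) ∈ [0,1]^d we write |x| := Π_{i=1}^d x⁽ⁱ⁾ and the left-hand integral is with respect to d-dimensional Lebesgue measure. -/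
open MeasureTheory Real

noncomputable section

namespace Stmt14Helpers

open Set
open scoped ENNReal

lemma my_scale (c : ℝ) (hc : 0 < c) (f : ℝ → ℝ≥0∞) (hf : Measurable f) :
    ∫⁻ t in Set.Ioc (0:ℝ) 1, f (c * t) = ENNReal.ofReal c⁻¹ * ∫⁻ u in Set.Ioc (0:ℝ) c, f u := by
  have hpre : (c * ·) ⁻¹' Set.Ioc (0:ℝ) c = Set.Ioc 0 1 := by
    ext t
    simp only [Set.mem_preimage, Set.mem_Ioc]
    constructor
    · rintro ⟨h1, h2⟩
      refine ⟨by nlinarith, by nlinarith⟩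
    · rintro ⟨h1, h2⟩
      exact ⟨by positivity, by nlinarith⟩
  have hmap : Measure.map (c * ·) (volume.restrict (Set.Ioc (0:ℝ) 1))
      = ENNReal.ofReal c⁻¹ • volume.restrict (Set.Ioc (0:ℝ) c) := by
    rw [← hpre, ← Measure.restrict_map (measurable_const_mul c) measurableSet_Ioc,
      Real.map_volume_mul_left hc.ne', abs_of_pos (inv_pos.2 hc), Measure.restrict_smul]
  rw [← lintegral_map hf (measurable_const_mul c), hmap, lintegral_smul_measure, smul_eq_mul]

lemma inner_meas (j m : ℕ) : Measurable (fun u : ℝ =>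
    ∫⁻ y in Set.Ioc (0:ℝ) u, ENNReal.ofReal ((log u - log y)^m * y^j * exp (-y))) := by
  have h1 : (fun u : ℝ => ∫⁻ y in Set.Ioc (0:ℝ) u,
      ENNReal.ofReal ((log u - log y)^m * y^j * exp (-y)))
      = fun u => ∫⁻ y, (fun p : ℝ × ℝ =>
          if 0 < p.2 ∧ p.2 ≤ p.1 then
            ENNReal.ofReal ((log p.1 - log p.2)^m * p.2^j * exp (-p.2)) else 0) (u, y) := by
    funext u
    rw [← lintegral_indicator measurableSet_Ioc]
    congr 1
    funext y
    simp [Set.indicator_apply, Set.mem_Ioc]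
  rw [h1]
  refine Measurable.lintegral_prod_right' (ν := volume)
    (f := fun p : ℝ × ℝ => if 0 < p.2 ∧ p.2 ≤ p.1 then
      ENNReal.ofReal ((log p.1 - log p.2)^m * p.2^j * exp (-p.2)) else 0) ?_
  apply Measurable.ite
  · exact (measurableSet_lt measurable_const measurable_snd).inter
      (measurableSet_le measurable_snd measurable_fst)
  · apply ENNReal.measurable_ofReal.comp
    exact ((((Real.measurable_log.comp measurable_fst).sub
      (Real.measurable_log.comp measurable_snd)).pow_const m).mul
      (measurable_snd.pow_const j)).mul (Real.measurable_exp.comp measurable_snd.neg)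
  · exact measurable_const

lemma my_swap (j m : ℕ) (n : ℝ) (hn : 0 < n) :
    (∫⁻ u in Set.Ioc (0:ℝ) n, (ENNReal.ofReal u)⁻¹ *
        ∫⁻ y in Set.Ioc (0:ℝ) u, ENNReal.ofReal ((log u - log y)^m * y^j * exp (-y))) =
    ENNReal.ofReal (1/(m+1) : ℝ) *
        ∫⁻ y in Set.Ioc (0:ℝ) n, ENNReal.ofReal ((log n - log y)^(m+1) * y^j * exp (-y)) := by
  set g : ℝ → ℝ → ℝ≥0∞ := fun u y =>
    (ENNReal.ofReal u)⁻¹ * ENNReal.ofReal ((log u - log y)^m * y^j * exp (-y)) with hg_def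
  set H : ℝ → ℝ → ℝ≥0∞ := fun u y => if y ≤ u then g u y else 0 with hH_def
  have hgmeas : Measurable (Function.uncurry g) := by
    apply Measurable.mul
    · exact (ENNReal.measurable_ofReal.comp measurable_fst).inv
    · apply ENNReal.measurable_ofReal.comp
      apply Measurable.mul
      · apply Measurable.mul
        · exact (((Real.measurable_log.comp measurable_fst).sub
            (Real.measurable_log.comp measurable_snd)).pow_const m)
        · exact measurable_snd.pow_const j
      · exact Real.measurable_exp.comp measurable_snd.neg
  have hHmeas : Measurable (Function.uncurry H) := by
    have : Function.uncurry H = fun p : ℝ × ℝ =>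
        if p.2 ≤ p.1 then Function.uncurry g p else 0 := rfl
    rw [this]
    exact Measurable.ite (measurableSet_le measurable_snd measurable_fst) hgmeas measurable_const
  have step1 : ∀ u ∈ Set.Ioc (0:ℝ) n,
      ((ENNReal.ofReal u)⁻¹ *
        ∫⁻ y in Set.Ioc (0:ℝ) u, ENNReal.ofReal ((log u - log y)^m * y^j * exp (-y)))
      = ∫⁻ y in Set.Ioc (0:ℝ) n, H u y := by
    intro u hu
    have hne : (ENNReal.ofReal u)⁻¹ ≠ ⊤ := by
      simp [ENNReal.ofReal_pos.2 hu.1, (ENNReal.ofReal_pos.2 hu.1).ne']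
    have hset : Set.Iic u ∩ Set.Ioc (0:ℝ) n = Set.Ioc 0 u := by
      ext y
      simp only [Set.mem_inter_iff, Set.mem_Iic, Set.mem_Ioc]
      constructor
      · rintro ⟨h1, h2, h3⟩; exact ⟨h2, h1⟩
      · rintro ⟨h1, h2⟩; exact ⟨h2, h1, h2.trans hu.2⟩
    have hind : ∀ y : ℝ, H u y = (Set.Iic u).indicator (fun y => g u y) y := by
      intro y
      simp [hH_def, Set.indicator_apply, Set.mem_Iic]
    rw [← lintegral_const_mul' _ _ hne]
    calc (∫⁻ y in Set.Ioc (0:ℝ) u, (ENNReal.ofReal u)⁻¹ *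
            ENNReal.ofReal ((log u - log y)^m * y^j * exp (-y)))
        = ∫⁻ y in Set.Iic u ∩ Set.Ioc (0:ℝ) n, g u y := by rw [hset]
      _ = ∫⁻ y, (Set.Iic u).indicator (fun y => g u y) y ∂(volume.restrict (Set.Ioc (0:ℝ) n)) := by
          rw [lintegral_indicator measurableSet_Iic, Measure.restrict_restrict measurableSet_Iic]
      _ = ∫⁻ y in Set.Ioc (0:ℝ) n, H u y := lintegral_congr fun y => (hind y).symm
  have step3 : ∀ y ∈ Set.Ioc (0:ℝ) n,
      (∫⁻ u in Set.Ioc (0:ℝ) n, H u y)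
      = ENNReal.ofReal ((log n - log y)^(m+1)/(m+1) * (y^j * exp (-y))) := by
    intro y hy
    have hset : Set.Ici y ∩ Set.Ioc (0:ℝ) n = Set.Icc y n := by
      ext u
      simp only [Set.mem_inter_iff, Set.mem_Ici, Set.mem_Ioc, Set.mem_Icc]
      constructor
      · rintro ⟨h1, h2, h3⟩; exact ⟨h1, h3⟩
      · rintro ⟨h1, h2⟩; exact ⟨h1, hy.1.trans_le h1, h2⟩
    have hind : ∀ u : ℝ, H u y = (Set.Ici y).indicator (fun u => g u y) u := by
      intro u
      simp [hH_def, Set.indicator_apply, Set.mem_Ici]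
    have e1 : (∫⁻ u in Set.Ioc (0:ℝ) n, H u y) = ∫⁻ u in Set.Icc y n, g u y := by
      calc (∫⁻ u in Set.Ioc (0:ℝ) n, H u y)
          = ∫⁻ u, (Set.Ici y).indicator (fun u => g u y) u
              ∂(volume.restrict (Set.Ioc (0:ℝ) n)) := lintegral_congr fun u => hind u
        _ = ∫⁻ u in Set.Ici y ∩ Set.Ioc (0:ℝ) n, g u y := by
            rw [lintegral_indicator measurableSet_Ici, Measure.restrict_restrict measurableSet_Ici]
        _ = _ := by rw [hset]
    rw [e1]
    set C : ℝ := y^j * exp (-y) with hC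
    have hCpos : 0 ≤ C := mul_nonneg (pow_nonneg hy.1.le j) (exp_pos _).le
    set F : ℝ → ℝ := fun u => (log u - log y)^m * u⁻¹ * C with hF
    have e2 : ∫⁻ u in Set.Icc y n, g u y = ∫⁻ u in Set.Icc y n, ENNReal.ofReal (F u) := by
      apply setLIntegral_congr_fun measurableSet_Icc
      intro u hu
      have hu0 : 0 < u := hy.1.trans_le hu.1
      rw [hg_def]
      simp only
      rw [← ENNReal.ofReal_inv_of_pos hu0, ← ENNReal.ofReal_mul (by positivity)]
      congr 1
      rw [hF, hC]; ring
    rw [e2]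
    have hcont : ContinuousOn F (Set.Icc y n) := by
      have hlog : ContinuousOn (fun u : ℝ => log u) (Set.Icc y n) :=
        Real.continuousOn_log.mono fun u hu => by
          simpa using (hy.1.trans_le hu.1).ne'
      have hinv : ContinuousOn (fun u : ℝ => u⁻¹) (Set.Icc y n) :=
        continuousOn_id.inv₀ fun u hu => (hy.1.trans_le hu.1).ne'
      exact (((hlog.sub continuousOn_const).pow m).mul hinv).mul continuousOn_const
    have hint : IntegrableOn F (Set.Icc y n) volume :=
      hcont.integrableOn_compact isCompact_Icc
    have hnn : 0 ≤ᵐ[volume.restrict (Set.Icc y n)] F := by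
      refine (ae_restrict_iff' measurableSet_Icc).mpr (Filter.Eventually.of_forall fun u hu => ?_)
      have hu0 : 0 < u := hy.1.trans_le hu.1
      have hll : log y ≤ log u := Real.log_le_log hy.1 hu.1
      have h1 : 0 ≤ (log u - log y) ^ m := pow_nonneg (by linarith) m
      show (0:ℝ) ≤ F u
      rw [hF]
      have := hCpos
      positivity
    rw [← ofReal_integral_eq_lintegral_ofReal hint hnn]
    congr 1
    have hyn : y ≤ n := hy.2
    rw [MeasureTheory.integral_Icc_eq_integral_Ioc, ← intervalIntegral.integral_of_le hyn]
    have hFc : F = fun u => (log u - log y)^m * u⁻¹ * C := rfl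
    rw [hFc, intervalIntegral.integral_mul_const]
    congr 1
    have hderiv : ∀ u ∈ Set.uIcc y n,
        HasDerivAt (fun u : ℝ => (log u - log y)^(m+1) / (m+1))
          ((log u - log y)^m * u⁻¹) u := by
      intro u hu
      rw [Set.uIcc_of_le hyn] at hu
      have hu0 : 0 < u := hy.1.trans_le hu.1
      have h1 : HasDerivAt (fun u : ℝ => log u - log y) u⁻¹ u :=
        (Real.hasDerivAt_log hu0.ne').sub_const (log y)
      have h2 := (h1.pow (m+1)).div_const ((m:ℝ)+1)
      refine h2.congr_deriv ?_
      have : (m:ℝ) + 1 ≠ 0 := by positivity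
      rw [div_eq_iff this]
      push_cast [Nat.add_sub_cancel]
      ring
    have hintc : IntervalIntegrable (fun u : ℝ => (log u - log y)^m * u⁻¹) volume y n := by
      apply ContinuousOn.intervalIntegrable
      rw [Set.uIcc_of_le hyn]
      have hlog : ContinuousOn (fun u : ℝ => log u) (Set.Icc y n) :=
        Real.continuousOn_log.mono fun u hu => by
          simpa using (hy.1.trans_le hu.1).ne'
      have hinv : ContinuousOn (fun u : ℝ => u⁻¹) (Set.Icc y n) :=
        continuousOn_id.inv₀ fun u hu => (hy.1.trans_le hu.1).ne'
      exact ((hlog.sub continuousOn_const).pow m).mul hinv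
    rw [intervalIntegral.integral_eq_sub_of_hasDerivAt hderiv hintc]
    rw [sub_self, zero_pow (Nat.succ_ne_zero m), zero_div, sub_zero]
  calc (∫⁻ u in Set.Ioc (0:ℝ) n, (ENNReal.ofReal u)⁻¹ *
        ∫⁻ y in Set.Ioc (0:ℝ) u, ENNReal.ofReal ((log u - log y)^m * y^j * exp (-y)))
      = ∫⁻ u in Set.Ioc (0:ℝ) n, ∫⁻ y in Set.Ioc (0:ℝ) n, H u y :=
        setLIntegral_congr_fun measurableSet_Ioc step1
    _ = ∫⁻ y in Set.Ioc (0:ℝ) n, ∫⁻ u in Set.Ioc (0:ℝ) n, H u y :=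
        lintegral_lintegral_swap (hHmeas.aemeasurable)
    _ = ∫⁻ y in Set.Ioc (0:ℝ) n,
          ENNReal.ofReal ((log n - log y)^(m+1)/(m+1) * (y^j * exp (-y))) :=
        setLIntegral_congr_fun measurableSet_Ioc step3
    _ = ENNReal.ofReal (1/(m+1) : ℝ) *
          ∫⁻ y in Set.Ioc (0:ℝ) n, ENNReal.ofReal ((log n - log y)^(m+1) * y^j * exp (-y)) := by
        rw [← lintegral_const_mul' _ _ ENNReal.ofReal_ne_top]
        apply setLIntegral_congr_fun measurableSet_Ioc
        intro y hy
        dsimp only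
        rw [← ENNReal.ofReal_mul (by positivity)]
        congr 1
        ring

lemma main_lin (j : ℕ) : ∀ (m : ℕ) (n : ℝ), 0 < n →
    ENNReal.ofReal n * ∫⁻ x in Set.Icc (0 : Fin (m+1) → ℝ) 1,
        ENNReal.ofReal (exp (-(n * ∏ i, x i)) * (n * ∏ i, x i) ^ j) =
    ENNReal.ofReal (1 / (Nat.factorial m : ℝ)) *
      ∫⁻ y in Set.Ioc (0:ℝ) n, ENNReal.ofReal ((log n - log y)^m * y^j * exp (-y)) := by
  intro m
  induction m with
  | zero =>
    intro n hn
    have mp := volume_preserving_funUnique (Fin 1) ℝ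
    set e := MeasurableEquiv.funUnique (Fin 1) ℝ with he
    have hpre : Set.Icc (0 : Fin 1 → ℝ) 1 = e ⁻¹' (Set.Icc (0:ℝ) 1) := by
      ext x
      simp [he, MeasurableEquiv.funUnique, Set.mem_Icc, Pi.le_def, Unique.forall_iff]
    have hcomp : ∀ x : Fin 1 → ℝ,
        ENNReal.ofReal (exp (-(n * ∏ i, x i)) * (n * ∏ i, x i) ^ j)
        = (fun t : ℝ => ENNReal.ofReal (exp (-(n * t)) * (n * t) ^ j)) (e x) := by
      intro x
      simp [he, MeasurableEquiv.funUnique, Fin.prod_univ_one]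
    have h1 : (∫⁻ x in Set.Icc (0 : Fin 1 → ℝ) 1,
        ENNReal.ofReal (exp (-(n * ∏ i, x i)) * (n * ∏ i, x i) ^ j))
        = ∫⁻ t in Set.Icc (0:ℝ) 1, ENNReal.ofReal (exp (-(n * t)) * (n * t) ^ j) := by
      rw [hpre, lintegral_congr hcomp]
      exact mp.setLIntegral_comp_preimage_emb e.measurableEmbedding
        (fun t : ℝ => ENNReal.ofReal (exp (-(n * t)) * (n * t) ^ j)) (Set.Icc 0 1)
    rw [h1, ← setLIntegral_congr (MeasureTheory.Ioc_ae_eq_Icc (μ := volume) (a := (0:ℝ)) (b := 1))]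
    have hfme' : Measurable (fun u : ℝ => ENNReal.ofReal (exp (-u) * u ^ j)) := by
      apply ENNReal.measurable_ofReal.comp
      exact (Real.measurable_exp.comp measurable_neg).mul (measurable_id.pow_const j)
    have hs := my_scale n hn (fun u : ℝ => ENNReal.ofReal (exp (-u) * u ^ j)) hfme'
    rw [hs, ← mul_assoc, ← ENNReal.ofReal_mul hn.le,
      mul_inv_cancel₀ hn.ne', ENNReal.ofReal_one, one_mul]
    simp only [Nat.factorial_zero, Nat.cast_one, pow_zero, one_mul]
    rw [show (1:ℝ)/1 = 1 by norm_num, ENNReal.ofReal_one, one_mul]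
    apply setLIntegral_congr_fun measurableSet_Ioc
    intro y hy
    dsimp only
    rw [mul_comm]
  | succ m ih =>
    intro n hn
    -- split off the first coordinate
    set e := MeasurableEquiv.piFinSuccAbove (fun _ : Fin (m+2) => ℝ) 0 with he
    have mp := volume_preserving_piFinSuccAbove (fun _ : Fin (m+2) => ℝ) 0
    set f : ℝ × (Fin (m+1) → ℝ) → ℝ≥0∞ := fun p =>
      ENNReal.ofReal (exp (-(n * (p.1 * ∏ i, p.2 i))) * (n * (p.1 * ∏ i, p.2 i)) ^ j) with hf
    have hfmeas : Measurable f := by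
      apply ENNReal.measurable_ofReal.comp
      have hprod : Measurable fun p : ℝ × (Fin (m+1) → ℝ) => n * (p.1 * ∏ i, p.2 i) := by
        apply Measurable.const_mul
        exact measurable_fst.mul
          (Finset.measurable_prod Finset.univ fun i _ => (measurable_pi_apply i).comp measurable_snd)
      exact (Real.measurable_exp.comp hprod.neg).mul (hprod.pow_const j)
    have hpre : Set.Icc (0 : Fin (m+2) → ℝ) 1
        = e ⁻¹' (Set.Icc (0:ℝ) 1 ×ˢ Set.Icc (0 : Fin (m+1) → ℝ) 1) := by
      ext x
      simp only [Set.mem_Icc, Set.mem_preimage, Set.mem_prod, Pi.le_def, Pi.zero_apply,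
        Pi.one_apply, he, MeasurableEquiv.piFinSuccAbove_apply,
        Fin.insertNthEquiv_symm_apply, Fin.removeNth, Fin.zero_succAbove]
      constructor
      · rintro ⟨h1, h2⟩
        exact ⟨⟨h1 0, h2 0⟩, fun i => h1 i.succ, fun i => h2 i.succ⟩
      · rintro ⟨⟨h1, h2⟩, h3, h4⟩
        constructor
        · intro i
          rcases Fin.eq_zero_or_eq_succ i with rfl | ⟨k, rfl⟩
          exacts [h1, h3 k]
        · intro i
          rcases Fin.eq_zero_or_eq_succ i with rfl | ⟨k, rfl⟩
          exacts [h2, h4 k]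
    have hcomp : ∀ x : Fin (m+2) → ℝ,
        ENNReal.ofReal (exp (-(n * ∏ i, x i)) * (n * ∏ i, x i) ^ j) = f (e x) := by
      intro x
      rw [hf, he]
      simp only [MeasurableEquiv.piFinSuccAbove_apply, Fin.insertNthEquiv_symm_apply,
        Fin.removeNth, Fin.zero_succAbove]
      rw [Fin.prod_univ_succ]
    have h1 : (∫⁻ x in Set.Icc (0 : Fin (m+2) → ℝ) 1,
        ENNReal.ofReal (exp (-(n * ∏ i, x i)) * (n * ∏ i, x i) ^ j))
        = ∫⁻ t in Set.Icc (0:ℝ) 1, ∫⁻ x in Set.Icc (0 : Fin (m+1) → ℝ) 1, f (t, x) := by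
      rw [hpre, lintegral_congr hcomp]
      rw [mp.setLIntegral_comp_preimage_emb e.measurableEmbedding f
        (Set.Icc (0:ℝ) 1 ×ˢ Set.Icc (0 : Fin (m+1) → ℝ) 1)]
      rw [MeasureTheory.Measure.volume_eq_prod, ← Measure.prod_restrict]
      exact lintegral_prod f hfmeas.aemeasurable
    -- φ : value of the inner integral as a function of u = n * t
    set G : ℝ → ℝ≥0∞ := fun u =>
      ∫⁻ y in Set.Ioc (0:ℝ) u, ENNReal.ofReal ((log u - log y)^m * y^j * exp (-y)) with hG
    set φ : ℝ → ℝ≥0∞ := fun u =>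
      (ENNReal.ofReal u)⁻¹ * (ENNReal.ofReal (1 / (Nat.factorial m : ℝ)) * G u) with hφ
    have hφmeas : Measurable φ :=
      (ENNReal.measurable_ofReal.comp measurable_id).inv.mul
        ((inner_meas j m).const_mul _)
    have h2 : ∀ t ∈ Set.Ioc (0:ℝ) 1,
        (∫⁻ x in Set.Icc (0 : Fin (m+1) → ℝ) 1, f (t, x)) = φ (n * t) := by
      intro t ht
      have hnt : 0 < n * t := mul_pos hn ht.1
      have hIH := ih (n * t) hnt
      have hfx : ∀ x : Fin (m+1) → ℝ, f (t, x)
          = ENNReal.ofReal (exp (-(n * t * ∏ i, x i)) * (n * t * ∏ i, x i) ^ j) := by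
        intro x
        rw [hf]
        simp only [mul_assoc]
      have hx : (∫⁻ x in Set.Icc (0 : Fin (m+1) → ℝ) 1, f (t, x))
          = ∫⁻ x in Set.Icc (0 : Fin (m+1) → ℝ) 1,
            ENNReal.ofReal (exp (-(n * t * ∏ i, x i)) * (n * t * ∏ i, x i) ^ j) :=
        lintegral_congr hfx
      rw [hx]
      have hne0 : ENNReal.ofReal (n * t) ≠ 0 := (ENNReal.ofReal_pos.2 hnt).ne'
      have hnetop : ENNReal.ofReal (n * t) ≠ ⊤ := ENNReal.ofReal_ne_top
      rw [hφ]
      simp only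
      rw [← hIH, ← mul_assoc, ENNReal.inv_mul_cancel hne0 hnetop, one_mul]
    rw [h1, ← setLIntegral_congr (MeasureTheory.Ioc_ae_eq_Icc (μ := volume) (a := (0:ℝ)) (b := 1)),
      setLIntegral_congr_fun measurableSet_Ioc h2,
      my_scale n hn φ hφmeas, ← mul_assoc, ← ENNReal.ofReal_mul hn.le,
      mul_inv_cancel₀ hn.ne', ENNReal.ofReal_one, one_mul]
    have h3 : (∫⁻ u in Set.Ioc (0:ℝ) n, φ u)
        = ENNReal.ofReal (1 / (Nat.factorial m : ℝ)) *
          ∫⁻ u in Set.Ioc (0:ℝ) n, (ENNReal.ofReal u)⁻¹ * G u := by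
      rw [← lintegral_const_mul' _ _ ENNReal.ofReal_ne_top]
      exact lintegral_congr fun u => by rw [hφ]; simp only; ring
    rw [h3, hG]
    rw [my_swap j m n hn, ← mul_assoc, ← ENNReal.ofReal_mul (by positivity)]
    congr 2
    rw [Nat.factorial_succ]
    push_cast
    rw [mul_comm ((m:ℝ)+1)]
    field_simp
  done

end Stmt14Helpers

theorem stmt14 {d : ℕ} (hd : 1 ≤ d) (j : ℕ) (n : ℝ) (hn : 0 < n) :
    n * ∫ x in Set.Icc (0 : Fin d → ℝ) 1,
        Real.exp (-(n * ∏ i, x i)) * (n * ∏ i, x i) ^ j =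
      (1 / (Nat.factorial (d - 1) : ℝ)) *
        ∫ y in Set.Ioc (0 : ℝ) n,
          (Real.log n - Real.log y) ^ (d - 1) * y ^ j * Real.exp (-y) := by
  obtain ⟨m, rfl⟩ : ∃ m, d = m + 1 := ⟨d - 1, (Nat.succ_pred_eq_of_pos hd).symm⟩
  simp only [Nat.add_sub_cancel]
  -- convert both sides to lintegrals
  have hL : (∫ x in Set.Icc (0 : Fin (m+1) → ℝ) 1,
      Real.exp (-(n * ∏ i, x i)) * (n * ∏ i, x i) ^ j)
      = (∫⁻ x in Set.Icc (0 : Fin (m+1) → ℝ) 1,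
        ENNReal.ofReal (Real.exp (-(n * ∏ i, x i)) * (n * ∏ i, x i) ^ j)).toReal := by
    apply integral_eq_lintegral_of_nonneg_ae
    · refine (ae_restrict_iff' measurableSet_Icc).mpr (Filter.Eventually.of_forall fun x hx => ?_)
      have hp : 0 ≤ ∏ i, x i := Finset.prod_nonneg fun i _ => hx.1 i
      have h1 : 0 ≤ n * ∏ i, x i := mul_nonneg hn.le hp
      positivity
    · apply Continuous.aestronglyMeasurable
      have hprod : Continuous fun x : Fin (m+1) → ℝ => n * ∏ i, x i :=
        continuous_const.mul (continuous_finset_prod _ fun i _ => continuous_apply i)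
      exact (Real.continuous_exp.comp hprod.neg).mul (hprod.pow j)
  have hR : (∫ y in Set.Ioc (0 : ℝ) n,
      (Real.log n - Real.log y) ^ m * y ^ j * Real.exp (-y))
      = (∫⁻ y in Set.Ioc (0:ℝ) n,
        ENNReal.ofReal ((Real.log n - Real.log y) ^ m * y ^ j * Real.exp (-y))).toReal := by
    apply integral_eq_lintegral_of_nonneg_ae
    · refine (ae_restrict_iff' measurableSet_Ioc).mpr (Filter.Eventually.of_forall fun y hy => ?_)
      have h1 : Real.log y ≤ Real.log n := Real.log_le_log hy.1 hy.2
      have h2 : 0 ≤ (Real.log n - Real.log y) ^ m := pow_nonneg (by linarith) m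
      have h3 : 0 ≤ y ^ j := pow_nonneg hy.1.le j
      positivity
    · apply Measurable.aestronglyMeasurable
      exact (((measurable_const.sub Real.measurable_log).pow_const m).mul
        (measurable_id.pow_const j)).mul (Real.measurable_exp.comp measurable_neg)
  rw [hL, hR]
  have key := Stmt14Helpers.main_lin j m n hn
  calc n * (∫⁻ x in Set.Icc (0 : Fin (m+1) → ℝ) 1,
        ENNReal.ofReal (Real.exp (-(n * ∏ i, x i)) * (n * ∏ i, x i) ^ j)).toReal
      = (ENNReal.ofReal n * ∫⁻ x in Set.Icc (0 : Fin (m+1) → ℝ) 1,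
        ENNReal.ofReal (Real.exp (-(n * ∏ i, x i)) * (n * ∏ i, x i) ^ j)).toReal := by
        rw [ENNReal.toReal_mul, ENNReal.toReal_ofReal hn.le]
    _ = (ENNReal.ofReal (1 / (Nat.factorial m : ℝ)) *
        ∫⁻ y in Set.Ioc (0:ℝ) n,
          ENNReal.ofReal ((Real.log n - Real.log y) ^ m * y ^ j * Real.exp (-y))).toReal := by
        rw [key]
    _ = (1 / (Nat.factorial m : ℝ)) * (∫⁻ y in Set.Ioc (0:ℝ) n,
          ENNReal.ofReal ((Real.log n - Real.log y) ^ m * y ^ j * Real.exp (-y))).toReal := by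
        rw [ENNReal.toReal_mul, ENNReal.toReal_ofReal (by positivity)]
end
end

section
/- For every natural number l there exists a constant C_l > 0 such that for all integers j ≥ 2: ∫_0^∞ |log y|^l·y^j·e^{−y} dy ≤ C_l·(log j)^l·j!. Equivalently, if X is a Gamma(j+1,1)-distributed random variable, then E[|log X|^l] ≤ C_l·(log j)^l. -/
open MeasureTheory Real

noncomputable section

lemma integrable_poly (n : ℕ) :
    IntegrableOn (fun y : ℝ => y ^ n * Real.exp (-y)) (Set.Ioi 0) := by
  have h := Real.GammaIntegral_convergent (s := n + 1) (by positivity)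
  refine (h.congr_fun ?_ measurableSet_Ioi)
  intro x hx
  rw [Set.mem_Ioi] at hx
  simp [Real.rpow_natCast, mul_comm]

lemma int_poly (n : ℕ) :
    (∫ y in Set.Ioi (0:ℝ), y ^ n * Real.exp (-y)) = n.factorial := by
  have h := Real.Gamma_eq_integral (s := n + 1) (by positivity)
  rw [Real.Gamma_nat_eq_factorial] at h
  rw [← h.symm]
  refine setIntegral_congr_fun measurableSet_Ioi fun x hx => ?_
  rw [Set.mem_Ioi] at hx
  simp [Real.rpow_natCast, mul_comm]

lemma log_le_aux (l : ℕ) (hl : 1 ≤ l) {y : ℝ} (hy : 0 < y) :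
    Real.log y ≤ 2*l * y ^ ((2*(l:ℝ)))⁻¹ := by
  have h2l : (0:ℝ) < 2*l := by positivity
  have hu : (0:ℝ) < y ^ ((2*(l:ℝ)))⁻¹ := Real.rpow_pos_of_pos hy _
  have hr := Real.log_rpow hy ((2*(l:ℝ)))⁻¹
  have hlog : Real.log y = 2*l * Real.log (y ^ ((2*(l:ℝ)))⁻¹) := by
    rw [hr]; field_simp
  rw [hlog]
  have h1 := Real.log_le_sub_one_of_pos hu
  nlinarith [hu]

lemma pow_half (l : ℕ) (hl : 1 ≤ l) {y : ℝ} (hy : 0 < y) :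
    (y ^ ((2*(l:ℝ)))⁻¹) ^ l = y ^ (1/2 : ℝ) := by
  rw [← Real.rpow_natCast (y ^ ((2*(l:ℝ)))⁻¹) l, ← Real.rpow_mul hy.le]
  congr 1
  have : (l:ℝ) ≠ 0 := by positivity
  field_simp

/-- Bound for `y ≥ 1`. -/
lemma log_pow_le (l : ℕ) (hl : 1 ≤ l) {y : ℝ} (hy : 1 ≤ y) :
    (Real.log y) ^ l ≤ (2*(l:ℝ))^l * y ^ (1/2 : ℝ) := by
  have hy0 : (0:ℝ) < y := lt_of_lt_of_le one_pos hy
  have h1 : Real.log y ≤ 2*l * y ^ ((2*(l:ℝ)))⁻¹ := log_le_aux l hl hy0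
  have h0 : 0 ≤ Real.log y := Real.log_nonneg hy
  calc (Real.log y) ^ l ≤ (2*l * y ^ ((2*(l:ℝ)))⁻¹) ^ l := pow_le_pow_left₀ h0 h1 l
    _ = (2*(l:ℝ))^l * (y ^ ((2*(l:ℝ)))⁻¹) ^ l := by rw [mul_pow]
    _ = (2*(l:ℝ))^l * y ^ (1/2 : ℝ) := by rw [pow_half l hl hy0]

/-- The key pointwise bound. -/
lemma pointwise_bound (l j : ℕ) (hj : 2 ≤ j) {y : ℝ} (hy : 0 < y) :
    |Real.log y| ^ l * y ^ j * Real.exp (-y) ≤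
      (2*(l:ℝ))^l * (y ^ (j-1) * Real.exp (-y)) +
      2^l * (Real.log j)^l * (y ^ j * Real.exp (-y)) +
      ((2*(l:ℝ))^l / j) * (y ^ (j+1) * Real.exp (-y)) := by
  have hexp : 0 < Real.exp (-y) := Real.exp_pos _
  have hj0 : (0:ℝ) < j := by positivity
  have hlogj : 0 < Real.log j := Real.log_pos (by exact_mod_cast hj.trans_lt' one_lt_two)
  have hA : (0:ℝ) ≤ (2*(l:ℝ))^l := by positivity
  -- nonnegativity of each RHS term
  have t1 : (0:ℝ) ≤ (2*(l:ℝ))^l * (y ^ (j-1) * Real.exp (-y)) := by positivity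
  have t2 : (0:ℝ) ≤ 2^l * (Real.log ↑j)^l * (y ^ j * Real.exp (-y)) := by positivity
  have t3 : (0:ℝ) ≤ ((2*(l:ℝ))^l / j) * (y ^ (j+1) * Real.exp (-y)) := by positivity
  rcases Nat.eq_zero_or_pos l with hl | hl
  · subst hl
    simp only [pow_zero, one_mul]
    nlinarith
  -- now 1 ≤ l
  rcases lt_or_ge y 1 with hy1 | hy1
  · -- case y < 1 : use first term
    have key : |Real.log y| ^ l * y ≤ (2*(l:ℝ))^l := by
      have hyi : 1 ≤ y⁻¹ := (one_le_inv_iff₀).mpr ⟨hy, hy1.le⟩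
      have habs : |Real.log y| = Real.log y⁻¹ := by
        rw [Real.log_inv, abs_of_nonpos (Real.log_nonpos hy.le hy1.le)]
      have h1 : |Real.log y| ^ l ≤ (2*(l:ℝ))^l * (y⁻¹) ^ (1/2:ℝ) := by
        rw [habs]; exact log_pow_le l hl hyi
      have h2 : (y⁻¹) ^ (1/2:ℝ) * y ≤ 1 := by
        rw [Real.inv_rpow hy.le]
        have hp : 0 < y ^ (1/2:ℝ) := Real.rpow_pos_of_pos hy _
        have heq : (y ^ (1/2:ℝ))⁻¹ * y = y ^ (1/2:ℝ) := by
          rw [inv_mul_eq_div, div_eq_iff hp.ne', ← Real.rpow_add hy]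
          norm_num
        rw [heq]
        exact Real.rpow_le_one hy.le hy1.le (by norm_num)
      calc |Real.log y| ^ l * y ≤ ((2*(l:ℝ))^l * (y⁻¹)^(1/2:ℝ)) * y :=
            mul_le_mul_of_nonneg_right h1 hy.le
        _ = (2*(l:ℝ))^l * ((y⁻¹)^(1/2:ℝ) * y) := by ring
        _ ≤ (2*(l:ℝ))^l * 1 := mul_le_mul_of_nonneg_left h2 hA
        _ = (2*(l:ℝ))^l := mul_one _
    have hstep : |Real.log y| ^ l * y ^ j * Real.exp (-y) ≤
        (2*(l:ℝ))^l * (y ^ (j-1) * Real.exp (-y)) := by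
      have hexpand : y ^ j = y * y ^ (j-1) := by
        conv_lhs => rw [show j = (j-1)+1 by omega]
        ring
      rw [hexpand]
      have hp : (0:ℝ) ≤ y ^ (j-1) * Real.exp (-y) := by positivity
      calc |Real.log y| ^ l * (y * y ^ (j-1)) * Real.exp (-y)
          = (|Real.log y| ^ l * y) * (y ^ (j-1) * Real.exp (-y)) := by ring
        _ ≤ (2*(l:ℝ))^l * (y ^ (j-1) * Real.exp (-y)) := by
            exact mul_le_mul_of_nonneg_right key hp
    nlinarith
  rcases le_or_gt y ((j:ℝ)^2) with hy2 | hy2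
  · -- case 1 ≤ y ≤ j^2 : middle term
    have habs : |Real.log y| = Real.log y := abs_of_nonneg (Real.log_nonneg hy1)
    have key : |Real.log y| ^ l ≤ 2^l * (Real.log j)^l := by
      rw [habs, ← mul_pow]
      refine pow_le_pow_left₀ (Real.log_nonneg hy1) ?_ l
      calc Real.log y ≤ Real.log ((j:ℝ)^2) := Real.log_le_log (by positivity) hy2
        _ = 2 * Real.log j := by rw [Real.log_pow]; push_cast; ring
    have hp : (0:ℝ) ≤ y ^ j * Real.exp (-y) := by positivity
    nlinarith [mul_le_mul_of_nonneg_right key hp]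
  · -- case y > j^2 : last term
    have hsq : (j:ℝ) ≤ Real.sqrt y := by
      rw [show (j:ℝ) = Real.sqrt ((j:ℝ)^2) by rw [Real.sqrt_sq hj0.le]]
      exact Real.sqrt_le_sqrt hy2.le
    have habs : |Real.log y| = Real.log y := abs_of_nonneg (Real.log_nonneg hy1)
    have key : |Real.log y| ^ l ≤ (2*(l:ℝ))^l / j * y := by
      rw [habs]
      calc (Real.log y) ^ l ≤ (2*(l:ℝ))^l * y ^ (1/2:ℝ) := log_pow_le l hl hy1
        _ = (2*(l:ℝ))^l * Real.sqrt y := by rw [Real.sqrt_eq_rpow]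
        _ ≤ (2*(l:ℝ))^l / j * y := by
            rw [div_mul_eq_mul_div, le_div_iff₀ hj0]
            have : Real.sqrt y * (j:ℝ) ≤ Real.sqrt y * Real.sqrt y :=
              mul_le_mul_of_nonneg_left hsq (Real.sqrt_nonneg y)
            rw [Real.mul_self_sqrt hy.le] at this
            nlinarith
    have hstep : |Real.log y| ^ l * y ^ j * Real.exp (-y) ≤
        ((2*(l:ℝ))^l / j) * (y ^ (j+1) * Real.exp (-y)) := by
      have hp : (0:ℝ) ≤ y ^ j * Real.exp (-y) := by positivity
      calc |Real.log y| ^ l * y ^ j * Real.exp (-y)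
          = |Real.log y| ^ l * (y ^ j * Real.exp (-y)) := by ring
        _ ≤ ((2*(l:ℝ))^l / j * y) * (y ^ j * Real.exp (-y)) :=
            mul_le_mul_of_nonneg_right key hp
        _ = ((2*(l:ℝ))^l / j) * (y ^ (j+1) * Real.exp (-y)) := by ring
    nlinarith

theorem stmt17 (l : ℕ) :
    ∃ C : ℝ, 0 < C ∧ ∀ j : ℕ, 2 ≤ j →
      (∫ y in Set.Ioi (0 : ℝ), |Real.log y| ^ l * y ^ j * Real.exp (-y)) ≤
        C * (Real.log j) ^ l * (Nat.factorial j : ℝ) := by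
  have hK : (0:ℝ) < (Real.log 2)^l := by
    have := Real.log_pos one_lt_two; positivity
  have hA0 : (0:ℝ) ≤ (2*(l:ℝ))^l := by positivity
  set A : ℝ := (2*(l:ℝ))^l with hA
  refine ⟨3*A/(Real.log 2)^l + 2^l, by positivity, ?_⟩
  intro j hj
  have hjR : (0:ℝ) < j := by positivity
  have hLog2 : Real.log 2 ≤ Real.log j := Real.log_le_log (by norm_num) (by exact_mod_cast hj)
  have hL : 0 < Real.log j := lt_of_lt_of_le (Real.log_pos one_lt_two) hLog2
  have i1 := (integrable_poly (j-1)).const_mul A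
  have i2 := (integrable_poly j).const_mul (2^l * (Real.log j)^l)
  have i3 := (integrable_poly (j+1)).const_mul (A / j)
  have step1 : (∫ y in Set.Ioi (0 : ℝ), |Real.log y| ^ l * y ^ j * Real.exp (-y)) ≤
      ∫ y in Set.Ioi (0:ℝ), (A * (y ^ (j-1) * Real.exp (-y)) +
        2^l * (Real.log j)^l * (y ^ j * Real.exp (-y)) +
        (A / j) * (y ^ (j+1) * Real.exp (-y))) := by
    refine integral_mono_of_nonneg ?_ ((i1.add i2).add i3) ?_
    · filter_upwards [ae_restrict_mem measurableSet_Ioi] with y hy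
      have hy0 : (0:ℝ) < y := hy
      positivity
    · filter_upwards [ae_restrict_mem measurableSet_Ioi] with y hy
      exact pointwise_bound l j hj hy
  have step2 : (∫ y in Set.Ioi (0:ℝ), (A * (y ^ (j-1) * Real.exp (-y)) +
        2^l * (Real.log j)^l * (y ^ j * Real.exp (-y)) +
        (A / j) * (y ^ (j+1) * Real.exp (-y)))) =
      A * (j-1).factorial + 2^l * (Real.log j)^l * j.factorial +
        (A / j) * (j+1).factorial := by
    have e1 := integral_add (μ := volume.restrict (Set.Ioi 0)) (i1.add i2) i3
    have e2 := integral_add (μ := volume.restrict (Set.Ioi 0)) i1 i2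
    simp only [Pi.add_apply] at e1 e2
    rw [e1, e2, integral_const_mul, integral_const_mul, integral_const_mul,
        int_poly, int_poly, int_poly]
  have f1 : (((j-1).factorial : ℕ):ℝ) ≤ (j.factorial : ℝ) := by
    exact_mod_cast Nat.factorial_le (Nat.sub_le j 1)
  have f2 : (((j+1).factorial : ℕ):ℝ) = (j+1) * (j.factorial : ℝ) := by
    rw [Nat.factorial_succ]; push_cast; ring
  have hfac0 : (0:ℝ) ≤ (j.factorial : ℝ) := by positivity
  have h3 : (A / j) * ((j+1).factorial : ℝ) ≤ 2 * A * (j.factorial : ℝ) := by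
    rw [f2]
    rw [div_mul_eq_mul_div, div_le_iff₀ hjR]
    have hj1 : (1:ℝ) ≤ j := by exact_mod_cast (Nat.one_le_of_lt hj)
    nlinarith [mul_nonneg hA0 hfac0]
  have hKL : (Real.log 2)^l ≤ (Real.log j)^l :=
    pow_le_pow_left₀ (Real.log_pos one_lt_two).le hLog2 l
  have h4 : 3 * A ≤ 3*A/(Real.log 2)^l * (Real.log j)^l := by
    rw [div_mul_eq_mul_div, le_div_iff₀ hK]
    nlinarith
  calc (∫ y in Set.Ioi (0 : ℝ), |Real.log y| ^ l * y ^ j * Real.exp (-y))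
      ≤ A * (j-1).factorial + 2^l * (Real.log j)^l * j.factorial +
        (A / j) * (j+1).factorial := step1.trans step2.le
    _ ≤ A * j.factorial + 2^l * (Real.log j)^l * j.factorial + 2 * A * j.factorial := by
        gcongr
    _ = 3 * A * j.factorial + 2^l * (Real.log j)^l * j.factorial := by ring
    _ ≤ (3*A/(Real.log 2)^l * (Real.log j)^l) * j.factorial
        + 2^l * (Real.log j)^l * j.factorial := by
        gcongr
    _ = (3*A/(Real.log 2)^l + 2^l) * (Real.log j)^l * j.factorial := by ring
end
end

section
/- For every s > 0, every α ∈ (0,1) and every y ∈ ℝ^d: c_{1,s,x₀}(y)^α ≤ exp(−α s ∫_{Rect(x₀,y)} g(z)dz) + c_{α,s,x₀}(y). -/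
open MeasureTheory Real

noncomputable section

/-- The closed hyperrectangle determined by two points of `ℝ^d`. -/
def Rect {d : ℕ} (x₁ x₂ : Fin d → ℝ) : Set (Fin d → ℝ) :=
  {z | ∀ i, min (x₁ i) (x₂ i) ≤ z i ∧ z i ≤ max (x₁ i) (x₂ i)}

/-- The function `c_{α,s,x₀}` from the paper. -/
def cfun {d : ℕ} (g φ : (Fin d → ℝ) → ℝ) (x₀ : Fin d → ℝ) (α s : ℝ)
    (y : Fin d → ℝ) : ℝ :=
  s * ∫ x, (Set.indicator (Rect x₀ x) (fun _ => (1 : ℝ)) y) *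
    Real.exp (-(α * s) * ∫ z in Rect x x₀, g z) * (φ x * g x)

lemma Rect_measurableSet {d : ℕ} (a b : Fin d → ℝ) : MeasurableSet (Rect a b) := by
  have : Rect a b = ⋂ i, ({z : Fin d → ℝ | min (a i) (b i) ≤ z i} ∩
      {z | z i ≤ max (a i) (b i)}) := by
    ext z; simp [Rect, Set.mem_iInter, forall_and]
  rw [this]
  exact MeasurableSet.iInter fun i =>
    (measurableSet_le measurable_const (measurable_pi_apply i)).inter
      (measurableSet_le (measurable_pi_apply i) measurable_const)

lemma rpow_key {α t b : ℝ} (hα : 0 < α) (hα1 : α < 1) (ht : 0 ≤ t) (hb : 0 < b) :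
    t ^ α ≤ b ^ α + b ^ (α - 1) * t := by
  rcases le_total t b with h | h
  · have h1 : t ^ α ≤ b ^ α := Real.rpow_le_rpow ht h hα.le
    have h2 : 0 ≤ b ^ (α - 1) * t := mul_nonneg (Real.rpow_nonneg hb.le _) ht
    linarith
  · have ht0 : 0 < t := lt_of_lt_of_le hb h
    have h1 : t ^ α = t ^ (α - 1) * t := by
      rw [← Real.rpow_add_one ht0.ne' (α - 1), sub_add_cancel]
    have h2 : t ^ (α - 1) ≤ b ^ (α - 1) :=
      Real.rpow_le_rpow_of_nonpos hb h (by linarith)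
    have h3 : 0 ≤ b ^ α := Real.rpow_nonneg hb.le _
    nlinarith [mul_le_mul_of_nonneg_right h2 ht0.le]

theorem stmt18 {d : ℕ}
    (g φ : (Fin d → ℝ) → ℝ)
    (hg0 : ∀ x, 0 ≤ g x) (hgmeas : Measurable g)
    (hgprob : ∫ x, g x = 1)
    (hφ0 : ∀ x, 0 ≤ φ x) (hφmeas : Measurable φ)
    (hφg : Integrable (fun x => φ x * g x))
    (x₀ : Fin d → ℝ)
    (s : ℝ) (hs : 0 < s) (α : ℝ) (hα : 0 < α) (hα1 : α < 1)
    (y : Fin d → ℝ) :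
    (cfun g φ x₀ 1 s y) ^ α ≤
      Real.exp (-(α * s) * ∫ z in Rect x₀ y, g z) + cfun g φ x₀ α s y := by
  classical
  have hgint : Integrable g := by
    by_contra h
    rw [integral_undef h] at hgprob; norm_num at hgprob
  -- notation
  set F : (Fin d → ℝ) → ℝ := fun x => ∫ z in Rect x x₀, g z with hF
  set G : ℝ := ∫ z in Rect x₀ y, g z with hG
  set Ind : (Fin d → ℝ) → ℝ :=
    fun x => Set.indicator (Rect x₀ x) (fun _ => (1 : ℝ)) y with hInd
  set f : ℝ → (Fin d → ℝ) → ℝ :=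
    fun β x => Ind x * Real.exp (-(β * s) * F x) * (φ x * g x) with hf
  -- basic positivity facts
  have hFnn : ∀ x, 0 ≤ F x := fun x =>
    setIntegral_nonneg (Rect_measurableSet x x₀) (fun z _ => hg0 z)
  have hGnn : 0 ≤ G := setIntegral_nonneg (Rect_measurableSet x₀ y) (fun z _ => hg0 z)
  have hIndmem : ∀ x, Ind x = if y ∈ Rect x₀ x then 1 else 0 := fun x =>
    Set.indicator_apply _ _ _
  have hInd01 : ∀ x, 0 ≤ Ind x ∧ Ind x ≤ 1 := by
    intro x; rw [hIndmem x]; split <;> norm_num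
  have hfnn : ∀ β x, 0 ≤ β → 0 ≤ f β x := by
    intro β x hβ
    exact mul_nonneg (mul_nonneg (hInd01 x).1 (Real.exp_pos _).le)
      (mul_nonneg (hφ0 x) (hg0 x))
  -- measurability of F
  have hB : MeasurableSet {p : (Fin d → ℝ) × (Fin d → ℝ) | p.2 ∈ Rect p.1 x₀} := by
    have : {p : (Fin d → ℝ) × (Fin d → ℝ) | p.2 ∈ Rect p.1 x₀} =
        ⋂ i, ({p : (Fin d → ℝ) × (Fin d → ℝ) | min (p.1 i) (x₀ i) ≤ p.2 i} ∩
          {p | p.2 i ≤ max (p.1 i) (x₀ i)}) := by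
      ext p; simp [Rect, Set.mem_iInter, forall_and]
    rw [this]
    refine MeasurableSet.iInter fun i => MeasurableSet.inter ?_ ?_
    · exact measurableSet_le ((measurable_fst.eval).min
        measurable_const) (measurable_snd.eval)
    · exact measurableSet_le (measurable_snd.eval)
        ((measurable_fst.eval).max measurable_const)
  have hFmeas : Measurable F := by
    have hk : Measurable fun p : (Fin d → ℝ) × (Fin d → ℝ) =>
        Set.indicator (Rect p.1 x₀) g p.2 := by
      have heq : (fun p : (Fin d → ℝ) × (Fin d → ℝ) => Set.indicator (Rect p.1 x₀) g p.2)
          = Set.indicator {q : (Fin d → ℝ) × (Fin d → ℝ) | q.2 ∈ Rect q.1 x₀}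
            (fun q => g q.2) := by
        funext p
        simp only [Set.indicator_apply, Set.mem_setOf_eq]
      rw [heq]
      exact (hgmeas.comp measurable_snd).indicator hB
    have hsm : StronglyMeasurable fun x : Fin d → ℝ =>
        ∫ z, Set.indicator (Rect x x₀) g z :=
      hk.stronglyMeasurable.integral_prod_right'
    have heq : F = fun x => ∫ z, Set.indicator (Rect x x₀) g z := by
      funext x
      exact (integral_indicator (Rect_measurableSet x x₀)).symm
    rw [heq]
    exact hsm.measurable
  -- measurability of Ind
  have hIndmeas : Measurable Ind := by
    have hA : MeasurableSet {x : Fin d → ℝ | y ∈ Rect x₀ x} := by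
      have : {x : Fin d → ℝ | y ∈ Rect x₀ x} =
          ⋂ i, ({x : Fin d → ℝ | min (x₀ i) (x i) ≤ y i} ∩
            {x | y i ≤ max (x₀ i) (x i)}) := by
        ext x; simp [Rect, Set.mem_iInter, forall_and]
      rw [this]
      refine MeasurableSet.iInter fun i => MeasurableSet.inter ?_ ?_
      · exact measurableSet_le (measurable_const.min (measurable_pi_apply i))
          measurable_const
      · exact measurableSet_le measurable_const
          (measurable_const.max (measurable_pi_apply i))
    have heq2 : Ind = Set.indicator {x : Fin d → ℝ | y ∈ Rect x₀ x} (fun _ => (1:ℝ)) := by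
      funext x
      rw [hIndmem x, Set.indicator_apply]
      simp only [Set.mem_setOf_eq]
    rw [heq2]
    exact measurable_const.indicator hA
  -- integrability of f β for β ≥ 0
  have hfint : ∀ β : ℝ, 0 ≤ β → Integrable (f β) := by
    intro β hβ
    refine Integrable.mono' hφg ?_ ?_
    · exact ((hIndmeas.mul ((measurable_const.mul hFmeas).exp)).mul
        (hφmeas.mul hgmeas)).aestronglyMeasurable
    · refine Filter.Eventually.of_forall fun x => ?_
      rw [Real.norm_eq_abs, abs_of_nonneg (hfnn β x hβ)]
      have h1 : Real.exp (-(β * s) * F x) ≤ 1 := by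
        rw [Real.exp_le_one_iff]
        have : 0 ≤ β * s * F x := mul_nonneg (mul_nonneg hβ hs.le) (hFnn x)
        linarith
      have h2 : 0 ≤ φ x * g x := mul_nonneg (hφ0 x) (hg0 x)
      calc Ind x * Real.exp (-(β * s) * F x) * (φ x * g x)
          ≤ 1 * 1 * (φ x * g x) := by
            apply mul_le_mul_of_nonneg_right _ h2
            exact mul_le_mul (hInd01 x).2 h1 (Real.exp_pos _).le zero_le_one
        _ = φ x * g x := by ring
  -- c-values
  have hc1 : cfun g φ x₀ 1 s y = s * ∫ x, f 1 x := rfl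
  have hcα : cfun g φ x₀ α s y = s * ∫ x, f α x := rfl
  have hc1nn : 0 ≤ cfun g φ x₀ 1 s y := by
    rw [hc1]
    exact mul_nonneg hs.le (integral_nonneg fun x => hfnn 1 x zero_le_one)
  have hcαnn : 0 ≤ cfun g φ x₀ α s y := by
    rw [hcα]
    exact mul_nonneg hs.le (integral_nonneg fun x => hfnn α x hα.le)
  set b : ℝ := Real.exp (-(s * G)) with hb
  have hbpos : 0 < b := Real.exp_pos _
  -- pointwise key inequality
  have hkey : ∀ x, b ^ (α - 1) * f 1 x ≤ f α x := by
    intro x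
    by_cases hy : y ∈ Rect x₀ x
    · have hsub : Rect x₀ y ⊆ Rect x x₀ := by
        intro z hz i
        have h1 := (hy i)
        have h2 := hz i
        constructor
        · calc min (x i) (x₀ i) = min (x₀ i) (x i) := min_comm _ _
            _ ≤ min (x₀ i) (y i) := le_min (min_le_left _ _) h1.1
            _ ≤ z i := h2.1
        · calc z i ≤ max (x₀ i) (y i) := h2.2
            _ ≤ max (x₀ i) (x i) := max_le (le_max_left _ _) h1.2
            _ = max (x i) (x₀ i) := max_comm _ _
      have hGF : G ≤ F x := by
        rw [hG, hF]
        exact setIntegral_mono_set hgint.integrableOn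
          (Filter.Eventually.of_forall hg0)
          (HasSubset.Subset.eventuallyLE hsub)
      have hbpow : b ^ (α - 1) = Real.exp ((1 - α) * (s * G)) := by
        rw [hb, ← Real.exp_mul]; ring_nf
      have hexp : Real.exp ((1 - α) * (s * G)) * Real.exp (-(1 * s) * F x)
          ≤ Real.exp (-(α * s) * F x) := by
        rw [← Real.exp_add, Real.exp_le_exp]
        have h1 : (1 - α) * (s * G) ≤ (1 - α) * (s * F x) := by
          apply mul_le_mul_of_nonneg_left _ (by linarith)
          exact mul_le_mul_of_nonneg_left hGF hs.le
        nlinarith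
      rw [hbpow]
      have h2 : 0 ≤ φ x * g x := mul_nonneg (hφ0 x) (hg0 x)
      have h3 : 0 ≤ Ind x := (hInd01 x).1
      calc Real.exp ((1 - α) * (s * G)) * (Ind x * Real.exp (-(1 * s) * F x) * (φ x * g x))
          = Ind x * (Real.exp ((1 - α) * (s * G)) * Real.exp (-(1 * s) * F x)) * (φ x * g x) := by
            ring
        _ ≤ Ind x * Real.exp (-(α * s) * F x) * (φ x * g x) := by
            apply mul_le_mul_of_nonneg_right _ h2
            exact mul_le_mul_of_nonneg_left hexp h3
    · have h0 : Ind x = 0 := by rw [hIndmem x]; simp [hy]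
      have e1 : f 1 x = 0 := by rw [hf]; simp [h0]
      have e2 : f α x = 0 := by rw [hf]; simp [h0]
      rw [e1, e2, mul_zero]
  -- integrate
  have hint : b ^ (α - 1) * cfun g φ x₀ 1 s y ≤ cfun g φ x₀ α s y := by
    rw [hc1, hcα]
    have h1 : b ^ (α - 1) * (s * ∫ x, f 1 x) = s * ∫ x, b ^ (α - 1) * f 1 x := by
      rw [integral_const_mul]; ring
    rw [h1]
    apply mul_le_mul_of_nonneg_left _ hs.le
    exact integral_mono ((hfint 1 zero_le_one).const_mul _) (hfint α hα.le) hkey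
  have hbα : Real.exp (-(α * s) * G) = b ^ α := by
    rw [hb, ← Real.exp_mul]; ring_nf
  calc (cfun g φ x₀ 1 s y) ^ α
      ≤ b ^ α + b ^ (α - 1) * cfun g φ x₀ 1 s y := rpow_key hα hα1 hc1nn hbpos
    _ ≤ Real.exp (-(α * s) * G) + cfun g φ x₀ α s y := by
        rw [hbα]; linarith
end
end
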